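/- Let b ≥ 2 be an integer, take E = {b−1}, and set c_m = ∫_{[0,1)} (1 − x)^m dμ_{b,{b−1}}(x) for m ≥ 0. Then for every integer m ≥ 1, Σ_{j=1}^{m} C(m,j)·(b^{m+1−j} − b^{j} + 1)·c_{m−j} = b·((b+1)^m − b^m), where C(m,j) is the binomial coefficient. -/

import Mathlib

open MeasureTheory Real ENNReal

/-- The digamma function `ψ(x) = d/dx log Γ(x)`. -/
noncomputable def digamma (x : ℝ) : ℝ := deriv (fun y => Real.log (Real.Gamma y)) x

/-- The Kempner sum `K(b,E)`: sum of reciprocals of positive integers whose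
base-`b` digits all avoid the excluded set `E`. -/
noncomputable def kempnerSum (b : ℕ) (E : Finset ℕ) : ℝ :=
  ∑' n : ℕ, if n ≠ 0 ∧ ∀ d ∈ Nat.digits b n, d ∉ E then (n : ℝ)⁻¹ else 0

/-- The measure `μ_{b,E}` on `[0,1)`: the sum, over all finite strings of admissible
digits (digits `< b` not in `E`), of the weighted Dirac mass `b^{-l} δ_{n(X)/b^l}`. -/
noncomputable def kempnerMeasure (b : ℕ) (E : Finset ℕ) : Measure ℝ :=
  Measure.sum (fun X : {l : List ℕ // ∀ d ∈ l, d < b ∧ d ∉ E} =>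
    ((b : ℝ≥0∞) ^ X.1.length)⁻¹ •
      Measure.dirac (((Nat.ofDigits b X.1 : ℕ) : ℝ) / (b : ℝ) ^ X.1.length))

/-- `E₁ = E` if `0 ∉ E`, and `E₁ = (E ∪ {b}) \ {0}` if `0 ∈ E`. -/
def Eone (b : ℕ) (E : Finset ℕ) : Finset ℕ :=
  if 0 ∈ E then insert b (E.erase 0) else E

/-- `ζ(s) = ∑_{k ≥ 1} k⁻ˢ`. -/
noncomputable def zetaVal (s : ℕ) : ℝ := ∑' k : ℕ, (((k : ℝ) + 1) ^ s)⁻¹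

/-- `v_m(d) = ∫_{[0,1)} (d - x)^m dμ_{b,E}(x)`. -/
noncomputable def vMoment (b : ℕ) (E : Finset ℕ) (m : ℕ) (d : ℝ) : ℝ :=
  ∫ x in Set.Ico (0 : ℝ) 1, (d - x) ^ m ∂(kempnerMeasure b E)

/-! ### Auxiliary development -/

section Aux

variable (b : ℕ)

/-- Admissible strings for the excluded set `{b-1}`. -/
abbrev KT := {l : List ℕ // ∀ d ∈ l, d < b ∧ d ∉ ({b - 1} : Finset ℕ)}

/-- The point of `[0,1)` associated to an admissible string. -/
noncomputable def kpt (X : KT b) : ℝ :=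
  ((Nat.ofDigits b X.1 : ℕ) : ℝ) / (b : ℝ) ^ X.1.length

/-- The weighted sum of `g` over all admissible strings. -/
noncomputable def kS (g : ℝ → ℝ≥0∞) : ℝ≥0∞ :=
  ∑' X : KT b, ((b : ℝ≥0∞) ^ X.1.length)⁻¹ * g (kpt b X)

variable {b}

lemma kpt_mem (hb : 2 ≤ b) (X : KT b) : kpt b X ∈ Set.Ico (0 : ℝ) 1 := by
  have hb0 : (0 : ℝ) < (b : ℝ) := by exact_mod_cast (by omega : 0 < b)
  have hbp : (0 : ℝ) < (b : ℝ) ^ X.1.length := pow_pos hb0 _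
  rw [Set.mem_Ico, kpt]
  constructor
  · exact div_nonneg (by positivity) hbp.le
  · rw [div_lt_one hbp]
    exact_mod_cast Nat.ofDigits_lt_base_pow_length (by omega) (fun x hx => (X.2 x hx).1)

lemma kS_le (hb : 2 ≤ b) {g h : ℝ → ℝ≥0∞} (hgh : ∀ x ∈ Set.Ico (0 : ℝ) 1, g x ≤ h x) :
    kS b g ≤ kS b h :=
  ENNReal.tsum_le_tsum fun X => mul_le_mul_right (hgh _ (kpt_mem hb X)) _

lemma kS_congr (hb : 2 ≤ b) {g h : ℝ → ℝ≥0∞} (hgh : ∀ x ∈ Set.Ico (0 : ℝ) 1, g x = h x) :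
    kS b g = kS b h :=
  tsum_congr fun X => by rw [hgh _ (kpt_mem hb X)]

lemma kS_mul (c : ℝ≥0∞) (g : ℝ → ℝ≥0∞) : kS b (fun x => c * g x) = c * kS b g := by
  rw [kS, kS, ← ENNReal.tsum_mul_left]
  exact tsum_congr fun X => by ring

lemma tsum_option' {γ : Type*} (g : Option γ → ℝ≥0∞) :
    ∑' o : Option γ, g o = g none + ∑' c : γ, g (some c) := by
  classical
  rw [ENNReal.tsum_eq_add_tsum_ite none]
  congr 1
  refine tsum_eq_tsum_of_ne_zero_bij (fun c => some c.1) ?_ ?_ ?_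
  · intro x y hxy
    exact Subtype.ext (Option.some_injective γ hxy)
  · rintro o ho
    simp only [Function.mem_support, ne_eq] at ho
    rcases o with _ | c
    · simp at ho
    · refine ⟨⟨c, ?_⟩, rfl⟩
      simpa using ho
  · intro x
    simp

variable (b)

/-- The structural equivalence: an admissible string is either empty, or an admissible
string with one more admissible digit appended (as most significant digit). -/
noncomputable def kE (hb : 2 ≤ b) : Option (KT b × Fin (b - 1)) ≃ KT b where
  toFun o :=
    match o with
    | none => ⟨[], by simp⟩
    | some (X, d) => ⟨X.1 ++ [d.1], by
        intro x hx
        rcases List.mem_append.1 hx with h | h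
        · exact X.2 x h
        · have hx' : x = d.1 := by simpa using h
          subst hx'
          have hd := d.2
          refine ⟨by omega, by simp; omega⟩⟩
  invFun X :=
    if h : X.1 = [] then none else
      some (⟨X.1.dropLast, fun d hd => X.2 d (List.dropLast_subset _ hd)⟩,
        ⟨X.1.getLast h, by
          have h1 := (X.2 _ (List.getLast_mem h)).1
          have h2 := (X.2 _ (List.getLast_mem h)).2
          simp only [Finset.mem_singleton] at h2
          omega⟩)
  left_inv o := by
    rcases o with _ | ⟨X, d⟩
    · simp
    · have hne : X.1 ++ [d.1] ≠ [] := by simp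
      simp only [dif_neg hne]
      congr 1
      refine Prod.ext (Subtype.ext ?_) (Fin.ext ?_)
      · simp [List.dropLast_concat]
      · simp [List.getLast_concat]
  right_inv X := by
    by_cases h : X.1 = []
    · simp only [dif_pos h]
      exact Subtype.ext h.symm
    · simp only [dif_neg h]
      exact Subtype.ext (List.dropLast_append_getLast h)

variable {b}

lemma kS_selfsim (hb : 2 ≤ b) (g : ℝ → ℝ≥0∞) :
    kS b g = g 0 + ∑ j ∈ Finset.range (b - 1),
      (b : ℝ≥0∞)⁻¹ * kS b (fun x => g ((x + j) / b)) := by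
  have hbR : (b : ℝ) ≠ 0 := by
    have h0 : (0:ℕ) < b := by omega
    exact_mod_cast h0.ne'
  have hbE : (b : ℝ≥0∞) ≠ 0 := by
    exact_mod_cast (by omega : b ≠ 0)
  rw [kS, ← (kE b hb).tsum_eq, tsum_option']
  congr 1
  · -- empty string contributes `g 0`
    simp [kE, kpt, Nat.ofDigits_nil]
  · -- nonempty strings
    rw [ENNReal.tsum_prod']
    have key : ∀ (X : KT b) (d : Fin (b - 1)),
        ((b : ℝ≥0∞) ^ ((kE b hb) (some (X, d))).1.length)⁻¹ *
            g (kpt b ((kE b hb) (some (X, d)))) =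
          (b : ℝ≥0∞)⁻¹ * (((b : ℝ≥0∞) ^ X.1.length)⁻¹ * g ((kpt b X + (d : ℕ)) / b)) := by
      intro X d
      have hlen : ((kE b hb) (some (X, d))).1.length = X.1.length + 1 := by
        simp [kE]
      have hpt : kpt b ((kE b hb) (some (X, d))) = (kpt b X + (d : ℕ)) / b := by
        simp only [kpt, kE, Equiv.coe_fn_mk, Nat.ofDigits_append, Nat.ofDigits_singleton,
          List.length_append, List.length_singleton]
        push_cast
        rw [pow_succ]
        field_simp
      rw [hlen, hpt, pow_succ,
        ENNReal.mul_inv (Or.inr (ENNReal.natCast_ne_top b))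
          (Or.inl (ENNReal.pow_ne_top (ENNReal.natCast_ne_top b)))]
      ring
    calc ∑' (X : KT b) (d : Fin (b - 1)),
          ((b : ℝ≥0∞) ^ ((kE b hb) (some (X, d))).1.length)⁻¹ *
            g (kpt b ((kE b hb) (some (X, d))))
        = ∑' (X : KT b) (d : Fin (b - 1)),
            (b : ℝ≥0∞)⁻¹ * (((b : ℝ≥0∞) ^ X.1.length)⁻¹ * g ((kpt b X + (d : ℕ)) / b)) :=
          tsum_congr fun X => tsum_congr fun d => key X d
      _ = ∑' (d : Fin (b - 1)) (X : KT b),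
            (b : ℝ≥0∞)⁻¹ * (((b : ℝ≥0∞) ^ X.1.length)⁻¹ * g ((kpt b X + (d : ℕ)) / b)) :=
          ENNReal.tsum_comm
      _ = ∑' d : Fin (b - 1), (b : ℝ≥0∞)⁻¹ * kS b (fun x => g ((x + (d : ℕ)) / b)) :=
          tsum_congr fun d => by rw [ENNReal.tsum_mul_left]; rfl
      _ = ∑ j ∈ Finset.range (b - 1), (b : ℝ≥0∞)⁻¹ * kS b (fun x => g ((x + j) / b)) := by
          rw [tsum_fintype]
          exact Fin.sum_univ_eq_sum_range
            (fun j => (b : ℝ≥0∞)⁻¹ * kS b (fun x => g ((x + j) / b))) (b - 1)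

lemma kS_one_ne_top (hb : 2 ≤ b) : kS b (fun _ => 1) ≠ ⊤ := by
  classical
  have hdig : ∀ (X : KT b) (i : Fin X.1.length), X.1.get i < b - 1 := by
    rintro X ⟨i, hi⟩
    have h1 := (X.2 _ (X.1.get_mem ⟨i, hi⟩)).1
    have h2 := (X.2 _ (X.1.get_mem ⟨i, hi⟩)).2
    simp only [Finset.mem_singleton] at h2
    omega
  set ι : KT b → (Σ n : ℕ, Fin n → Fin (b - 1)) := fun X =>
    ⟨X.1.length, fun i => ⟨X.1.get i, hdig X i⟩⟩ with hι
  have hdec : ∀ X : KT b, List.ofFn (fun i => (((ι X).2 i : ℕ))) = X.1 :=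
    fun X => List.ofFn_get X.1
  have hinj : Function.Injective ι := by
    intro X Y h
    have h' : List.ofFn (fun i => (((ι X).2 i : ℕ))) = List.ofFn (fun i => (((ι Y).2 i : ℕ))) :=
      congrArg (fun p : Σ n : ℕ, Fin n → Fin (b - 1) => List.ofFn (fun i => ((p.2 i : ℕ)))) h
    exact Subtype.ext ((hdec X).symm.trans (h'.trans (hdec Y)))
  have hle : kS b (fun _ => 1) ≤ ∑' p : Σ n : ℕ, Fin n → Fin (b - 1), ((b : ℝ≥0∞) ^ p.1)⁻¹ := by
    rw [kS]
    simp only [mul_one]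
    exact ENNReal.tsum_comp_le_tsum_of_injective hinj (fun p => ((b : ℝ≥0∞) ^ p.1)⁻¹)
  refine ne_top_of_le_ne_top ?_ hle
  rw [ENNReal.tsum_sigma']
  have hfib : ∀ n : ℕ, (∑' _ : Fin n → Fin (b - 1), ((b : ℝ≥0∞) ^ n)⁻¹)
      = (((b - 1 : ℕ) : ℝ≥0∞) * (b : ℝ≥0∞)⁻¹) ^ n := by
    intro n
    rw [tsum_fintype, Finset.sum_const, nsmul_eq_mul, mul_pow, ENNReal.inv_pow]
    congr 1
    rw [Finset.card_univ, Fintype.card_fun]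
    push_cast
    simp
  rw [tsum_congr hfib, ENNReal.tsum_geometric]
  have hb0 : (b : ℝ≥0∞) ≠ 0 := by exact_mod_cast (by omega : b ≠ 0)
  have hr : ((b - 1 : ℕ) : ℝ≥0∞) * (b : ℝ≥0∞)⁻¹ < 1 := by
    rw [← div_eq_mul_inv, ENNReal.div_lt_iff (Or.inl hb0) (Or.inl (ENNReal.natCast_ne_top b)),
      one_mul]
    exact_mod_cast (by omega : b - 1 < b)
  have h1 : (1 : ℝ≥0∞) - ((b - 1 : ℕ) : ℝ≥0∞) * (b : ℝ≥0∞)⁻¹ ≠ 0 := by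
    rw [Ne, tsub_eq_zero_iff_le]
    exact hr.not_ge
  exact ENNReal.inv_ne_top.2 h1

lemma klint (hb : 2 ≤ b) {f : ℝ → ℝ} (hf : Measurable f) :
    ∫⁻ x in Set.Ico (0 : ℝ) 1, ENNReal.ofReal (f x) ∂(kempnerMeasure b {b - 1})
      = kS b (fun x => ENNReal.ofReal (f x)) := by
  classical
  rw [kempnerMeasure, Measure.restrict_sum_of_countable, lintegral_sum_measure]
  refine tsum_congr fun X => ?_
  have hmem := kpt_mem hb X
  rw [kpt] at hmem
  rw [Measure.restrict_smul, restrict_dirac' measurableSet_Ico,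
    if_pos hmem, lintegral_smul_measure,
    lintegral_dirac' _ hf.ennreal_ofReal]
  rfl

lemma kmeas_ne_top (hb : 2 ≤ b) : kempnerMeasure b {b - 1} (Set.Ico (0 : ℝ) 1) ≠ ⊤ := by
  have h := klint (b := b) hb (f := fun _ => (1 : ℝ)) measurable_const
  simp only [ENNReal.ofReal_one] at h
  rw [setLIntegral_one] at h
  rw [h]
  exact kS_one_ne_top hb

lemma kfinite (hb : 2 ≤ b) :
    IsFiniteMeasure ((kempnerMeasure b {b - 1}).restrict (Set.Ico (0 : ℝ) 1)) := by
  constructor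
  rw [Measure.restrict_apply_univ]
  exact (kmeas_ne_top hb).lt_top

lemma kint (hb : 2 ≤ b) {f : ℝ → ℝ} (hf : Continuous f)
    (h0 : ∀ x ∈ Set.Ico (0 : ℝ) 1, 0 ≤ f x) :
    ∫ x in Set.Ico (0 : ℝ) 1, f x ∂(kempnerMeasure b {b - 1})
      = (kS b (fun x => ENNReal.ofReal (f x))).toReal := by
  rw [integral_eq_lintegral_of_nonneg_ae
      ((ae_restrict_iff' measurableSet_Ico).2 (ae_of_all _ h0))
      hf.aestronglyMeasurable, klint hb hf.measurable]

lemma kintegrable (hb : 2 ≤ b) (i : ℕ) :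
    Integrable (fun x : ℝ => (1 - x) ^ i)
      ((kempnerMeasure b {b - 1}).restrict (Set.Ico (0 : ℝ) 1)) := by
  haveI := kfinite hb
  refine (integrable_const (1 : ℝ)).mono' ?_ ?_
  · exact (Continuous.pow (by continuity) i).aestronglyMeasurable
  · refine (ae_restrict_iff' measurableSet_Ico).2 (ae_of_all _ ?_)
    rintro x ⟨h0, h1⟩
    have habs : |1 - x| ≤ 1 := by rw [abs_le]; constructor <;> linarith
    calc ‖(1 - x) ^ i‖ = |1 - x| ^ i := by rw [Real.norm_eq_abs, abs_pow]
      _ ≤ 1 ^ i := pow_le_pow_left₀ (abs_nonneg _) habs i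
      _ = 1 := one_pow i

lemma kbinom (hb : 2 ≤ b) (m : ℕ) (k : ℝ) :
    vMoment b {b - 1} m k
      = ∑ j ∈ Finset.range (m + 1), (m.choose j : ℝ) * (k - 1) ^ j *
          vMoment b {b - 1} (m - j) 1 := by
  haveI := kfinite hb
  have hpt : ∀ x : ℝ, (k - x) ^ m
      = ∑ j ∈ Finset.range (m + 1), ((m.choose j : ℝ) * (k - 1) ^ j) * (1 - x) ^ (m - j) := by
    intro x
    have h := add_pow (k - 1) (1 - x) m
    have h2 : k - 1 + (1 - x) = k - x := by ring
    rw [h2] at h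
    rw [h]
    exact Finset.sum_congr rfl fun j hj => by ring
  rw [vMoment]
  simp_rw [hpt]
  rw [integral_finset_sum _ (fun j hj => (kintegrable hb (m - j)).const_mul _)]
  exact Finset.sum_congr rfl fun j hj => integral_const_mul _ _

lemma kWbinom (hb : 2 ≤ b) (m : ℕ) :
    (∫ x in Set.Ico (0 : ℝ) 1, ((b : ℝ) + 1 - b * x) ^ m ∂(kempnerMeasure b {b - 1}))
      = ∑ j ∈ Finset.range (m + 1), (m.choose j : ℝ) * (b : ℝ) ^ (m - j) *
          vMoment b {b - 1} (m - j) 1 := by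
  haveI := kfinite hb
  have hpt : ∀ x : ℝ, ((b : ℝ) + 1 - b * x) ^ m
      = ∑ j ∈ Finset.range (m + 1),
          ((m.choose j : ℝ) * (b : ℝ) ^ (m - j)) * (1 - x) ^ (m - j) := by
    intro x
    have h := add_pow (1 : ℝ) ((b : ℝ) * (1 - x)) m
    have h2 : (1 : ℝ) + (b : ℝ) * (1 - x) = (b : ℝ) + 1 - b * x := by ring
    rw [h2] at h
    rw [h]
    refine Finset.sum_congr rfl fun j hj => ?_
    rw [mul_pow]
    ring
  simp_rw [hpt]
  rw [integral_finset_sum _ (fun j hj => (kintegrable hb (m - j)).const_mul _)]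
  exact Finset.sum_congr rfl fun j hj => integral_const_mul _ _

variable (b) in
/-- The `ℝ≥0∞`-valued moment. -/
noncomputable def kV (m : ℕ) (k : ℝ) : ℝ≥0∞ :=
  kS b (fun x => ENNReal.ofReal ((k - x) ^ m))

lemma kV_ne_top (hb : 2 ≤ b) (m : ℕ) {k : ℝ} (hk : 1 ≤ k) : kV b m k ≠ ⊤ := by
  have hle : kV b m k ≤ ENNReal.ofReal (k ^ m) * kS b (fun _ => 1) := by
    rw [← kS_mul]
    refine kS_le hb fun x hx => ?_
    rw [mul_one]
    refine ENNReal.ofReal_le_ofReal (pow_le_pow_left₀ ?_ ?_ m)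
    · linarith [hx.2]
    · linarith [hx.1]
  exact ne_top_of_le_ne_top
    (ENNReal.mul_ne_top ENNReal.ofReal_ne_top (kS_one_ne_top hb)) hle

lemma kV_toReal (hb : 2 ≤ b) (m : ℕ) {k : ℝ} (hk : 1 ≤ k) :
    (kV b m k).toReal = vMoment b {b - 1} m k := by
  rw [vMoment, kint hb (by continuity) (fun x hx => pow_nonneg (by linarith [hx.2]) m)]
  rfl

lemma kF1E (hb : 2 ≤ b) (m : ℕ) :
    (b : ℝ≥0∞) ^ (m + 1) * kV b m 1
      = (b : ℝ≥0∞) ^ (m + 1) + ∑ j ∈ Finset.range (b - 1), kV b m ((b : ℝ) - j) := by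
  have hb0 : (b : ℝ≥0∞) ≠ 0 := by exact_mod_cast (by omega : b ≠ 0)
  have hbt : (b : ℝ≥0∞) ≠ ⊤ := ENNReal.natCast_ne_top b
  have hbR : (0 : ℝ) < (b : ℝ) := by exact_mod_cast (by omega : 0 < b)
  have hterm : ∀ j : ℕ,
      kS b (fun x => ENNReal.ofReal ((1 - (x + (j : ℕ)) / b) ^ m))
        = ((b : ℝ≥0∞) ^ m)⁻¹ * kV b m ((b : ℝ) - j) := by
    intro j
    have hof : ∀ x : ℝ, ENNReal.ofReal ((1 - (x + (j : ℕ)) / b) ^ m)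
        = ((b : ℝ≥0∞) ^ m)⁻¹ * ENNReal.ofReal (((b : ℝ) - j - x) ^ m) := by
      intro x
      have hx : (1 - (x + (j : ℝ)) / b) ^ m
          = ((b : ℝ) ^ m)⁻¹ * ((b : ℝ) - j - x) ^ m := by
        rw [show (1 : ℝ) - (x + (j : ℝ)) / b = ((b : ℝ) - j - x) / b by field_simp; ring,
          div_pow, div_eq_mul_inv, mul_comm]
      rw [hx, ENNReal.ofReal_mul (by positivity), ENNReal.ofReal_inv_of_pos (by positivity),
        ENNReal.ofReal_pow (by positivity), ENNReal.ofReal_natCast]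
    calc kS b (fun x => ENNReal.ofReal ((1 - (x + (j : ℕ)) / b) ^ m))
        = kS b (fun x => ((b : ℝ≥0∞) ^ m)⁻¹ * ENNReal.ofReal (((b : ℝ) - j - x) ^ m)) := by
          simp_rw [hof]
      _ = ((b : ℝ≥0∞) ^ m)⁻¹ * kV b m ((b : ℝ) - j) := kS_mul _ _
  have hsim := kS_selfsim hb (fun x => ENNReal.ofReal ((1 - x) ^ m))
  beta_reduce at hsim
  have hg0 : ENNReal.ofReal ((1 - (0 : ℝ)) ^ m) = 1 := by norm_num
  rw [hg0] at hsim
  have h1 : (b : ℝ≥0∞) * (b : ℝ≥0∞)⁻¹ = 1 := ENNReal.mul_inv_cancel hb0 hbt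
  have h2 : (b : ℝ≥0∞) ^ m * ((b : ℝ≥0∞) ^ m)⁻¹ = 1 :=
    ENNReal.mul_inv_cancel (pow_ne_zero _ hb0) (ENNReal.pow_ne_top hbt)
  calc (b : ℝ≥0∞) ^ (m + 1) * kV b m 1
      = (b : ℝ≥0∞) ^ (m + 1) * (1 + ∑ j ∈ Finset.range (b - 1),
          (b : ℝ≥0∞)⁻¹ * kS b (fun x => ENNReal.ofReal ((1 - (x + (j : ℕ)) / b) ^ m))) := by
        rw [kV, hsim]
    _ = (b : ℝ≥0∞) ^ (m + 1) + ∑ j ∈ Finset.range (b - 1), kV b m ((b : ℝ) - j) := by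
        rw [mul_add, mul_one, Finset.mul_sum]
        congr 1
        refine Finset.sum_congr rfl fun j hj => ?_
        rw [hterm j]
        calc (b : ℝ≥0∞) ^ (m + 1) * ((b : ℝ≥0∞)⁻¹ * (((b : ℝ≥0∞) ^ m)⁻¹ * kV b m ((b : ℝ) - j)))
            = ((b : ℝ≥0∞) * (b : ℝ≥0∞)⁻¹) * (((b : ℝ≥0∞) ^ m * ((b : ℝ≥0∞) ^ m)⁻¹)
                * kV b m ((b : ℝ) - j)) := by rw [pow_succ]; ring
          _ = kV b m ((b : ℝ) - j) := by rw [h1, h2, one_mul, one_mul]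

lemma kF2E (hb : 2 ≤ b) (m : ℕ) :
    (b : ℝ≥0∞) * kS b (fun x => ENNReal.ofReal (((b : ℝ) + 1 - b * x) ^ m))
      = (b : ℝ≥0∞) * ENNReal.ofReal (((b : ℝ) + 1) ^ m)
        + ∑ j ∈ Finset.range (b - 1), kV b m ((b : ℝ) + 1 - j) := by
  have hb0 : (b : ℝ≥0∞) ≠ 0 := by exact_mod_cast (by omega : b ≠ 0)
  have hbt : (b : ℝ≥0∞) ≠ ⊤ := ENNReal.natCast_ne_top b
  have hbR : (0 : ℝ) < (b : ℝ) := by exact_mod_cast (by omega : 0 < b)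
  have hterm : ∀ j : ℕ,
      kS b (fun x => ENNReal.ofReal (((b : ℝ) + 1 - b * ((x + (j : ℕ)) / b)) ^ m))
        = kV b m ((b : ℝ) + 1 - j) := by
    intro j
    show _ = kS b (fun x => ENNReal.ofReal ((((b : ℝ) + 1 - (j : ℕ)) - x) ^ m))
    refine kS_congr hb fun x hx => ?_
    show ENNReal.ofReal (((b : ℝ) + 1 - b * ((x + (j : ℕ)) / b)) ^ m) = _
    congr 1
    have hxx : (b : ℝ) * ((x + (j : ℝ)) / b) = x + j := by field_simp
    rw [hxx]
    ring
  have hsim := kS_selfsim hb (fun x => ENNReal.ofReal (((b : ℝ) + 1 - b * x) ^ m))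
  beta_reduce at hsim
  have h1 : (b : ℝ≥0∞) * (b : ℝ≥0∞)⁻¹ = 1 := ENNReal.mul_inv_cancel hb0 hbt
  rw [hsim, mul_add, Finset.mul_sum]
  have hg0 : ((b : ℝ) + 1 - b * 0) ^ m = ((b : ℝ) + 1) ^ m := by ring_nf
  rw [hg0]
  congr 1
  refine Finset.sum_congr rfl fun j hj => ?_
  rw [← mul_assoc, h1, one_mul, hterm j]

lemma kF1R (hb : 2 ≤ b) (m : ℕ) :
    (b : ℝ) ^ (m + 1) * vMoment b {b - 1} m 1
      = (b : ℝ) ^ (m + 1)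
        + ∑ j ∈ Finset.range (b - 1), vMoment b {b - 1} m ((b : ℝ) - j) := by
  have hk : ∀ j ∈ Finset.range (b - 1), (1 : ℝ) ≤ (b : ℝ) - j := by
    intro j hj
    have hj' : (j : ℝ) + 1 ≤ (b : ℝ) := by
      exact_mod_cast (by have := Finset.mem_range.1 hj; omega : j + 1 ≤ b)
    linarith
  have hbt : (b : ℝ≥0∞) ≠ ⊤ := ENNReal.natCast_ne_top b
  have hh := congrArg ENNReal.toReal (kF1E hb m)
  rw [ENNReal.toReal_mul, ENNReal.toReal_add (ENNReal.pow_ne_top hbt)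
      ((ENNReal.sum_lt_top.2 fun j hj => (kV_ne_top hb m (hk j hj)).lt_top).ne),
    ENNReal.toReal_sum (fun j hj => kV_ne_top hb m (hk j hj)),
    ENNReal.toReal_pow, ENNReal.toReal_natCast, kV_toReal hb m le_rfl] at hh
  rw [hh]
  congr 1
  exact Finset.sum_congr rfl fun j hj => kV_toReal hb m (hk j hj)

lemma kF2R (hb : 2 ≤ b) (m : ℕ) :
    (b : ℝ) * (∫ x in Set.Ico (0 : ℝ) 1, ((b : ℝ) + 1 - b * x) ^ m ∂(kempnerMeasure b {b - 1}))
      = (b : ℝ) * ((b : ℝ) + 1) ^ m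
        + ∑ j ∈ Finset.range (b - 1), vMoment b {b - 1} m ((b : ℝ) + 1 - j) := by
  have hbR : (0 : ℝ) < (b : ℝ) := by exact_mod_cast (by omega : 0 < b)
  have hbt : (b : ℝ≥0∞) ≠ ⊤ := ENNReal.natCast_ne_top b
  have hk : ∀ j ∈ Finset.range (b - 1), (1 : ℝ) ≤ (b : ℝ) + 1 - j := by
    intro j hj
    have hj' : (j : ℝ) ≤ (b : ℝ) := by
      exact_mod_cast (by have := Finset.mem_range.1 hj; omega : j ≤ b)
    linarith
  have hWne : kS b (fun x => ENNReal.ofReal (((b : ℝ) + 1 - b * x) ^ m)) ≠ ⊤ := by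
    have hle : kS b (fun x => ENNReal.ofReal (((b : ℝ) + 1 - b * x) ^ m))
        ≤ ENNReal.ofReal (((b : ℝ) + 1) ^ m) * kS b (fun _ => 1) := by
      rw [← kS_mul]
      refine kS_le hb fun x hx => ?_
      rw [mul_one]
      have hb1 : (0 : ℝ) ≤ (b : ℝ) + 1 - b * x := by nlinarith [hx.1, hx.2, hbR]
      have hb2 : (b : ℝ) + 1 - b * x ≤ (b : ℝ) + 1 := by nlinarith [hx.1, hx.2, hbR]
      exact ENNReal.ofReal_le_ofReal (pow_le_pow_left₀ hb1 hb2 m)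
    exact ne_top_of_le_ne_top
      (ENNReal.mul_ne_top ENNReal.ofReal_ne_top (kS_one_ne_top hb)) hle
  have hWint : (kS b (fun x => ENNReal.ofReal (((b : ℝ) + 1 - b * x) ^ m))).toReal
      = ∫ x in Set.Ico (0 : ℝ) 1, ((b : ℝ) + 1 - b * x) ^ m ∂(kempnerMeasure b {b - 1}) := by
    rw [kint hb (by continuity) (fun x hx => pow_nonneg (by nlinarith [hx.1, hx.2, hbR]) m)]
  have hh := congrArg ENNReal.toReal (kF2E hb m)
  rw [ENNReal.toReal_mul, ENNReal.toReal_add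
      (ENNReal.mul_ne_top hbt ENNReal.ofReal_ne_top)
      ((ENNReal.sum_lt_top.2 fun j hj => (kV_ne_top hb m (hk j hj)).lt_top).ne),
    ENNReal.toReal_mul, ENNReal.toReal_sum (fun j hj => kV_ne_top hb m (hk j hj)),
    ENNReal.toReal_natCast, ENNReal.toReal_ofReal (by positivity), hWint] at hh
  rw [hh]
  congr 1
  exact Finset.sum_congr rfl fun j hj => kV_toReal hb m (hk j hj)

variable (b) in
/-- The moment polynomial `G(i) = Σ_j C(m,j) i^j c_{m-j}`. -/
noncomputable def kG (m i : ℕ) : ℝ :=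
  ∑ j ∈ Finset.range (m + 1), (m.choose j : ℝ) * ((i : ℕ) : ℝ) ^ j * vMoment b {b - 1} (m - j) 1

lemma kVG (hb : 2 ≤ b) (m i : ℕ) : vMoment b {b - 1} m ((i : ℝ) + 1) = kG b m i := by
  rw [kbinom hb m ((i : ℝ) + 1), kG]
  refine Finset.sum_congr rfl fun j hj => ?_
  have h : (i : ℝ) + 1 - 1 = (i : ℝ) := by ring
  rw [h]

lemma sum_Icc_eq (f : ℕ → ℝ) (m : ℕ) :
    ∑ j ∈ Finset.Icc 1 m, f j = (∑ j ∈ Finset.range (m + 1), f j) - f 0 := by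
  have h : Finset.range (m + 1) = insert 0 (Finset.Icc 1 m) := by
    ext x
    simp only [Finset.mem_range, Finset.mem_insert, Finset.mem_Icc]
    omega
  rw [h, Finset.sum_insert (by simp)]
  ring

end Aux

theorem complementary_moment_recurrence (b : ℕ) (hb : 2 ≤ b) :
    ∀ m : ℕ, 1 ≤ m →
      ∑ j ∈ Finset.Icc 1 m, (m.choose j : ℝ) *
          ((b : ℝ) ^ (m + 1 - j) - (b : ℝ) ^ j + 1) *
          (∫ x in Set.Ico (0 : ℝ) 1, (1 - x) ^ (m - j) ∂(kempnerMeasure b {b - 1})) =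
        (b : ℝ) * (((b : ℝ) + 1) ^ m - (b : ℝ) ^ m) := by
  intro m hm
  have hF1 := kF1R hb m
  have hF2 := kF2R hb m
  -- reindex the two `range (b-1)` sums in terms of `kG`
  have hS1 : ∑ j ∈ Finset.range (b - 1), vMoment b {b - 1} m ((b : ℝ) - j)
      = ∑ j ∈ Finset.range (b - 1), kG b m (j + 1) := by
    rw [← Finset.sum_range_reflect (fun i => kG b m (i + 1)) (b - 1)]
    refine Finset.sum_congr rfl fun j hj => ?_
    have hj' : j < b - 1 := Finset.mem_range.1 hj
    rw [← kVG hb m (b - 1 - 1 - j + 1)]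
    congr 1
    rw [show b - 1 - 1 - j + 1 = b - (j + 1) by omega,
      Nat.cast_sub (by omega : j + 1 ≤ b)]
    push_cast
    ring
  have hS2 : ∑ j ∈ Finset.range (b - 1), vMoment b {b - 1} m ((b : ℝ) + 1 - j)
      = ∑ j ∈ Finset.range (b - 1), kG b m (j + 2) := by
    rw [← Finset.sum_range_reflect (fun i => kG b m (i + 2)) (b - 1)]
    refine Finset.sum_congr rfl fun j hj => ?_
    have hj' : j < b - 1 := Finset.mem_range.1 hj
    rw [← kVG hb m (b - 1 - 1 - j + 2)]
    congr 1
    rw [show b - 1 - 1 - j + 2 = b - j by omega,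
      Nat.cast_sub (by omega : j ≤ b)]
    push_cast
    ring
  rw [hS1] at hF1
  rw [hS2] at hF2
  -- telescoping
  have htel : ∑ j ∈ Finset.range (b - 1), kG b m (j + 2)
      = (∑ j ∈ Finset.range (b - 1), kG b m (j + 1)) + kG b m b - kG b m 1 := by
    have h := Finset.sum_range_sub (fun i => kG b m (i + 1)) (b - 1)
    rw [show b - 1 + 1 = b by omega] at h
    rw [Finset.sum_sub_distrib] at h
    have h2 : ∑ j ∈ Finset.range (b - 1), kG b m (j + 1 + 1)
        = ∑ j ∈ Finset.range (b - 1), kG b m (j + 2) :=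
      Finset.sum_congr rfl fun j _ => rfl
    rw [h2] at h
    linarith
  -- split the statement sum
  have hXsplit : ∀ j ∈ Finset.Icc 1 m,
      (m.choose j : ℝ) * ((b : ℝ) ^ (m + 1 - j) - (b : ℝ) ^ j + 1) *
          (∫ x in Set.Ico (0 : ℝ) 1, (1 - x) ^ (m - j) ∂(kempnerMeasure b {b - 1}))
        = ((b : ℝ) * ((m.choose j : ℝ) * (b : ℝ) ^ (m - j) * vMoment b {b - 1} (m - j) 1)
            - (m.choose j : ℝ) * ((b : ℕ) : ℝ) ^ j * vMoment b {b - 1} (m - j) 1)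
          + (m.choose j : ℝ) * ((1 : ℕ) : ℝ) ^ j * vMoment b {b - 1} (m - j) 1 := by
    intro j hj
    have hj' := Finset.mem_Icc.1 hj
    have hpow : (b : ℝ) ^ (m + 1 - j) = (b : ℝ) * (b : ℝ) ^ (m - j) := by
      rw [show m + 1 - j = (m - j) + 1 by omega, pow_succ]
      ring
    have hvm : (∫ x in Set.Ico (0 : ℝ) 1, (1 - x) ^ (m - j) ∂(kempnerMeasure b {b - 1}))
        = vMoment b {b - 1} (m - j) 1 := rfl
    rw [hvm, hpow]
    push_cast
    ring
  rw [Finset.sum_congr rfl hXsplit, Finset.sum_add_distrib, Finset.sum_sub_distrib,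
    ← Finset.mul_sum, sum_Icc_eq, sum_Icc_eq, sum_Icc_eq]
  have hA : ∑ j ∈ Finset.range (m + 1), (m.choose j : ℝ) * (b : ℝ) ^ (m - j) *
      vMoment b {b - 1} (m - j) 1
      = ∫ x in Set.Ico (0 : ℝ) 1, ((b : ℝ) + 1 - b * x) ^ m ∂(kempnerMeasure b {b - 1}) :=
    (kWbinom hb m).symm
  have hB : ∑ j ∈ Finset.range (m + 1), (m.choose j : ℝ) * ((b : ℕ) : ℝ) ^ j *
      vMoment b {b - 1} (m - j) 1 = kG b m b := rfl
  have hC : ∑ j ∈ Finset.range (m + 1), (m.choose j : ℝ) * ((1 : ℕ) : ℝ) ^ j *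
      vMoment b {b - 1} (m - j) 1 = kG b m 1 := rfl
  rw [hA, hB, hC]
  beta_reduce
  simp only [Nat.choose_zero_right, Nat.sub_zero, pow_zero, Nat.cast_one, one_mul, mul_one]
  linear_combination hF2 - hF1 + htel
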